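/- An nc polynomial q in x, x^T, h, h^T is an nc complex hessian of some nc polynomial if and only if (P1) each monomial of q contains exactly one factor h_j and exactly one factor h_k^T for some j, k, and (P2) whenever a monomial m occurs in q, every monomial Levi-differentially wed to m also occurs in q with the same coefficient. -/

import Mathlib

/-- Variables `x_1,…,x_g` (as `Sum.inl i`) and `x_1ᵀ,…,x_gᵀ` (as `Sum.inr i`). -/
abbrev XV (g : ℕ) := Fin g ⊕ Fin g

/-- Letters: `Sum.inl v` is the variable `x^{i}_{j}`, `Sum.inr v` the direction
variable `h^{i}_{j}`. -/
abbrev LV (g : ℕ) := XV g ⊕ XV g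

/-- `a` is an untransposed `h_j` letter. -/
def isH {g : ℕ} (a : LV g) : Bool := match a with
  | .inr (.inl _) => true
  | _ => false

/-- `a` is a transposed `h_kᵀ` letter. -/
def isHT {g : ℕ} (a : LV g) : Bool := match a with
  | .inr (.inr _) => true
  | _ => false

/-- Forget the `h`-marking of a letter (`h^{i}_{j} ↦ x^{i}_{j}`). -/
def flatL {g : ℕ} : LV g → XV g := Sum.elim id id

/-- The monomial `w` contains exactly one `h_j` and exactly one `h_kᵀ`. -/
def OneHOneHT {g : ℕ} (w : FreeMonoid (LV g)) : Prop :=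
  (FreeMonoid.toList w).countP isH = 1 ∧ (FreeMonoid.toList w).countP isHT = 1

/-- Two monomials, each containing exactly one `h_j` and one `h_kᵀ`, are
Levi-differentially wed: one is obtained from the other by exchanging the `h_j` with
some `x`-variable factor and/or exchanging the `h_kᵀ` with some `xᵀ`-variable factor
(preserving indices); equivalently, they agree after forgetting the `h`-markings. -/
def LeviWed {g : ℕ} (w w' : FreeMonoid (LV g)) : Prop :=
  OneHOneHT w ∧ OneHOneHT w' ∧
    (FreeMonoid.toList w).map flatL = (FreeMonoid.toList w').map flatL

/-- The nc complex hessian of a single monomial (word) `l` in `x, xᵀ`: the sum over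
all pairs of positions `(i, j)` with `l.get i` untransposed and `l.get j` transposed
of the word with those two factors replaced by the corresponding `h`, `hᵀ`. -/
noncomputable def hessWord {g : ℕ} (l : List (XV g)) :
    MonoidAlgebra ℝ (FreeMonoid (LV g)) :=
  ∑ i : Fin l.length, ∑ j : Fin l.length,
    if (l.get i).isLeft = true ∧ (l.get j).isRight = true then
      MonoidAlgebra.single
        (FreeMonoid.ofList (List.ofFn fun m : Fin l.length =>
          if m = i ∨ m = j then (Sum.inr (l.get m) : LV g) else Sum.inl (l.get m))) 1
    else 0

/-- The nc complex hessian
`q(x,xᵀ)[h,hᵀ] = ∂²/∂s∂t p(x+th, y+sk)|_{t=s=0, y=xᵀ, k=hᵀ}` of an nc polynomial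
`p` in `x, xᵀ`, extended linearly from monomials. -/
noncomputable def complexHessianM {g : ℕ}
    (p : MonoidAlgebra ℝ (FreeMonoid (XV g))) : MonoidAlgebra ℝ (FreeMonoid (LV g)) :=
  ∑ l ∈ p.coeff.support, p.coeff l • hessWord (FreeMonoid.toList l)

lemma countP_ofFn' {α} (p : α → Bool) : ∀ {n} (f : Fin n → α),
    (List.ofFn f).countP p = ∑ m : Fin n, if p (f m) then 1 else 0
  | 0, f => by simp
  | n+1, f => by
    rw [List.ofFn_succ, List.countP_cons, countP_ofFn' p, Fin.sum_univ_succ]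
    by_cases h : p (f 0) <;> simp [h, add_comm]

lemma uniq_of_countP_one {α} (p : α → Bool) (l : List α) (h : l.countP p = 1) :
    ∃ i : Fin l.length, p (l.get i) ∧ ∀ m : Fin l.length, p (l.get m) → m = i := by
  have h2 : ∑ m : Fin l.length, (if p (l.get m) then 1 else 0) = 1 := by
    rw [← countP_ofFn', List.ofFn_get]; exact h
  rw [Finset.sum_boole, Nat.cast_id, Finset.card_eq_one] at h2
  obtain ⟨a, ha⟩ := h2
  have mem : ∀ m : Fin l.length, m ∈ Finset.univ.filter (fun m => p (l.get m) = true) ↔ m = a := by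
    intro m; rw [ha, Finset.mem_singleton]
  refine ⟨a, ?_, fun m hm => ?_⟩
  · have := (mem a).mpr rfl; exact (Finset.mem_filter.mp this).2
  · exact (mem m).mp (Finset.mem_filter.mpr ⟨Finset.mem_univ _, hm⟩)

def markW {g : ℕ} (l : List (XV g)) (i j : Fin l.length) : List (LV g) :=
  List.ofFn fun m : Fin l.length =>
    if m = i ∨ m = j then (Sum.inr (l.get m) : LV g) else Sum.inl (l.get m)

lemma markW_flat {g : ℕ} (l : List (XV g)) (i j : Fin l.length) :
    (markW l i j).map flatL = l := by
  rw [markW, List.map_ofFn]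
  have : (flatL ∘ fun m : Fin l.length =>
      if m = i ∨ m = j then (Sum.inr (l.get m) : LV g) else Sum.inl (l.get m)) = l.get := by
    funext m; by_cases hm : m = i ∨ m = j <;> simp [flatL, hm]
  rw [this, List.ofFn_get]

lemma markW_countH {g : ℕ} (l : List (XV g)) (i j : Fin l.length)
    (hi : (l.get i).isLeft = true) (hj : (l.get j).isRight = true) :
    (markW l i j).countP isH = 1 := by
  rw [markW, countP_ofFn']
  have key : ∀ m : Fin l.length,
      (if isH (if m = i ∨ m = j then (Sum.inr (l.get m) : LV g) else Sum.inl (l.get m)) then 1 else 0)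
        = if m = i then 1 else 0 := by
    intro m
    rcases eq_or_ne m i with rfl | hmi
    · obtain ⟨v, hv⟩ := Sum.isLeft_iff.mp hi; rw [List.get_eq_getElem] at hv; simp [hv, isH]
    · rcases eq_or_ne m j with rfl | hmj
      · obtain ⟨v, hv⟩ := Sum.isRight_iff.mp hj; rw [List.get_eq_getElem] at hv; simp [hv, isH, hmi]
      · simp [hmi, hmj, isH]
  rw [Finset.sum_congr rfl fun m _ => key m]
  simp

lemma markW_countHT {g : ℕ} (l : List (XV g)) (i j : Fin l.length)
    (hi : (l.get i).isLeft = true) (hj : (l.get j).isRight = true) :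
    (markW l i j).countP isHT = 1 := by
  rw [markW, countP_ofFn']
  have key : ∀ m : Fin l.length,
      (if isHT (if m = i ∨ m = j then (Sum.inr (l.get m) : LV g) else Sum.inl (l.get m)) then 1 else 0)
        = if m = j then 1 else 0 := by
    intro m
    rcases eq_or_ne m j with rfl | hmj
    · obtain ⟨v, hv⟩ := Sum.isRight_iff.mp hj; rw [List.get_eq_getElem] at hv; simp [hv, isHT]
    · rcases eq_or_ne m i with rfl | hmi
      · obtain ⟨v, hv⟩ := Sum.isLeft_iff.mp hi; rw [List.get_eq_getElem] at hv; simp [hv, isHT, hmj]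
      · simp [hmi, hmj, isHT]
  rw [Finset.sum_congr rfl fun m _ => key m]
  simp

lemma isH_iff {g : ℕ} (a : LV g) : isH a = true ↔ ∃ v, a = Sum.inr (Sum.inl v) := by
  rcases a with (v|v)|(v|v) <;> simp [isH]

lemma isHT_iff {g : ℕ} (a : LV g) : isHT a = true ↔ ∃ v, a = Sum.inr (Sum.inr v) := by
  rcases a with (v|v)|(v|v) <;> simp [isHT]

lemma not_left_right {g : ℕ} (a : XV g) (h1 : a.isLeft = true) (h2 : a.isRight = true) : False := by
  rcases a with v|v <;> simp_all

lemma eq_inl_of {g : ℕ} (a : LV g) (h1 : ¬ isH a = true) (h2 : ¬ isHT a = true) :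
    ∃ v, a = Sum.inl v := by
  rcases a with (v|v)|(v|v) <;> simp_all [isH, isHT]

lemma markW_inj {g : ℕ} (l : List (XV g)) {i j i' j' : Fin l.length}
    (hi : (l.get i).isLeft = true) (hj : (l.get j).isRight = true)
    (hi' : (l.get i').isLeft = true) (hj' : (l.get j').isRight = true)
    (h : markW l i j = markW l i' j') : i = i' ∧ j = j' := by
  rw [markW, markW, List.ofFn_inj] at h
  constructor
  · have h1 := congrFun h i
    rw [if_pos (Or.inl rfl)] at h1
    by_cases hc : i = i' ∨ i = j'
    · rcases hc with hc | hc
      · exact hc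
      · exfalso; rw [hc] at hi; exact not_left_right _ hi hj'
    · rw [if_neg hc] at h1; exact absurd h1 (by simp)
  · have h1 := congrFun h j
    rw [if_pos (Or.inr rfl)] at h1
    by_cases hc : j = i' ∨ j = j'
    · rcases hc with hc | hc
      · exfalso; rw [hc] at hj; exact not_left_right _ hi' hj
      · exact hc
    · rw [if_neg hc] at h1; exact absurd h1 (by simp)

lemma recover {g : ℕ} (l : List (XV g)) (w : List (LV g))
    (h1 : w.countP isH = 1) (h2 : w.countP isHT = 1) (hfl : w.map flatL = l) :
    ∃ i j : Fin l.length, (l.get i).isLeft = true ∧ (l.get j).isRight = true ∧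
      w = markW l i j := by
  have hlen : w.length = l.length := by rw [← hfl, List.length_map]
  obtain ⟨i₀, hi₀, hi₀u⟩ := uniq_of_countP_one isH w h1
  obtain ⟨j₀, hj₀, hj₀u⟩ := uniq_of_countP_one isHT w h2
  obtain ⟨a, ha⟩ := (isH_iff _).mp hi₀
  obtain ⟨b, hb⟩ := (isHT_iff _).mp hj₀
  rw [List.get_eq_getElem] at ha hb
  have hget : ∀ (m : ℕ) (hm : m < w.length), l[m]'(hlen ▸ hm) = flatL (w[m]) := by
    intro m hm
    have : l[m]'(hlen ▸ hm) = (w.map flatL)[m]'(by simpa using hm) := by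
      congr 1; exact hfl.symm
    rw [this, List.getElem_map]
  refine ⟨Fin.cast hlen i₀, Fin.cast hlen j₀, ?_, ?_, ?_⟩
  · simp only [List.get_eq_getElem, Fin.coe_cast]
    rw [hget _ i₀.isLt, ha]; rfl
  · simp only [List.get_eq_getElem, Fin.coe_cast]
    rw [hget _ j₀.isLt, hb]; rfl
  · apply List.ext_getElem (by simp [markW, hlen])
    intro m hm1 hm2
    have hml : m < l.length := hlen ▸ hm1
    have hgm := hget m hm1
    simp only [markW, List.getElem_ofFn, List.get_eq_getElem]
    split_ifs with hc
    · rcases hc with hc | hc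
      · have hmi : m = (i₀ : ℕ) := by simpa using congrArg Fin.val hc
        subst hmi
        rw [hgm, ha]
        rfl
      · have hmj : m = (j₀ : ℕ) := by simpa using congrArg Fin.val hc
        subst hmj
        rw [hgm, hb]
        rfl
    · push_neg at hc
      have hnH : ¬ isH w[m] = true := by
        intro hH
        have : (⟨m, hm1⟩ : Fin w.length) = i₀ := hi₀u _ (by rw [List.get_eq_getElem]; exact hH)
        exact hc.1 (Fin.ext (by simpa using congrArg Fin.val this))
      have hnHT : ¬ isHT w[m] = true := by
        intro hH
        have : (⟨m, hm1⟩ : Fin w.length) = j₀ := hj₀u _ (by rw [List.get_eq_getElem]; exact hH)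
        exact hc.2 (Fin.ext (by simpa using congrArg Fin.val this))
      obtain ⟨v, hv⟩ := eq_inl_of _ hnH hnHT
      rw [hgm, hv]
      rfl


open scoped Classical in
lemma hessWord_apply {g : ℕ} (l : List (XV g)) (w : FreeMonoid (LV g)) :
    (hessWord l).coeff w = if OneHOneHT w ∧ (FreeMonoid.toList w).map flatL = l then 1 else 0 := by
  classical
  have hrw : hessWord l = ∑ i : Fin l.length, ∑ j : Fin l.length,
      if (l.get i).isLeft = true ∧ (l.get j).isRight = true then
        MonoidAlgebra.single (FreeMonoid.ofList (markW l i j)) 1 else 0 := rfl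
  have appsum : ∀ {ι : Type} (s : Finset ι) (f : ι → MonoidAlgebra ℝ (FreeMonoid (LV g))),
      (∑ i ∈ s, f i).coeff w = ∑ i ∈ s, (f i).coeff w := fun s f => by
      rw [MonoidAlgebra.coeff_sum, Finsupp.finset_sum_apply]
  have happ0 : (0 : MonoidAlgebra ℝ (FreeMonoid (LV g))).coeff w = 0 := rfl
  have hsingle : ∀ (a : FreeMonoid (LV g)),
      (MonoidAlgebra.single a (1:ℝ)).coeff w = if a = w then 1 else 0 :=
    fun a => MonoidAlgebra.coeff_single_apply
  rw [hrw]
  simp only [appsum, apply_ite (fun f : MonoidAlgebra ℝ (FreeMonoid (LV g)) => f.coeff w),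
    happ0, hsingle]
  by_cases H : OneHOneHT w ∧ (FreeMonoid.toList w).map flatL = l
  · obtain ⟨⟨c1, c2⟩, hfl⟩ := H
    obtain ⟨i₀, j₀, hI, hJ, hw⟩ := recover l (FreeMonoid.toList w) c1 c2 hfl
    rw [if_pos ⟨⟨c1, c2⟩, hfl⟩]
    have hone : (∑ i : Fin l.length, ∑ j : Fin l.length,
        if i = i₀ ∧ j = j₀ then (1 : ℝ) else 0) = 1 := by
      simp [ite_and, Finset.sum_ite_eq']
    refine Eq.trans (Finset.sum_congr rfl fun i _ => Finset.sum_congr rfl fun j _ => ?_) hone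
    by_cases hij : i = i₀ ∧ j = j₀
    · obtain ⟨rfl, rfl⟩ := hij
      have hofl : FreeMonoid.ofList (markW l i j) = w := by rw [← hw]; rfl
      rw [if_pos ⟨hI, hJ⟩, if_pos hofl, if_pos (⟨rfl, rfl⟩ : i = i ∧ j = j)]
    · rw [if_neg hij]
      split_ifs with hcond heq
      · exfalso
        have ht : FreeMonoid.toList w = markW l i j := by
          rw [← heq]; rfl
        exact hij (markW_inj l hcond.1 hcond.2 hI hJ (ht.symm.trans hw))
      · rfl
      · rfl
  · rw [if_neg H]
    refine Finset.sum_eq_zero fun i _ => Finset.sum_eq_zero fun j _ => ?_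
    split_ifs with hcond heq
    · exfalso
      have ht : FreeMonoid.toList w = markW l i j := by rw [← heq]; rfl
      refine H ⟨⟨?_, ?_⟩, ?_⟩
      · rw [ht]; exact markW_countH l i j hcond.1 hcond.2
      · rw [ht]; exact markW_countHT l i j hcond.1 hcond.2
      · rw [ht]; exact markW_flat l i j
    · rfl
    · rfl

open scoped Classical in
lemma complexHessianM_apply {g : ℕ} (p : MonoidAlgebra ℝ (FreeMonoid (XV g)))
    (w : FreeMonoid (LV g)) :
    (complexHessianM p).coeff w =
      if OneHOneHT w then p.coeff (FreeMonoid.ofList ((FreeMonoid.toList w).map flatL)) else 0 := by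
  classical
  have appsum : ∀ {ι : Type} (s : Finset ι) (f : ι → MonoidAlgebra ℝ (FreeMonoid (LV g))),
      (∑ i ∈ s, f i).coeff w = ∑ i ∈ s, (f i).coeff w := fun s f => by
      rw [MonoidAlgebra.coeff_sum, Finsupp.finset_sum_apply]
  have hsmul : ∀ (c : ℝ) (f : MonoidAlgebra ℝ (FreeMonoid (LV g))), (c • f).coeff w = c * f.coeff w :=
    fun c f => rfl
  rw [complexHessianM]
  simp only [appsum, hsmul, hessWord_apply, mul_ite, mul_one, mul_zero]
  by_cases hw : OneHOneHT w
  · rw [if_pos hw]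
    have hcong : ∀ l ∈ p.coeff.support,
        (if OneHOneHT w ∧ (FreeMonoid.toList w).map flatL = FreeMonoid.toList l
          then p.coeff l else 0)
          = if l = FreeMonoid.ofList ((FreeMonoid.toList w).map flatL) then p.coeff l else 0 := by
      intro l _
      refine if_congr ⟨fun h => ?_, fun h => ?_⟩ rfl rfl
      · rw [h.2]; rfl
      · exact ⟨hw, by rw [h]; rfl⟩
    rw [Finset.sum_congr rfl hcong, Finset.sum_ite_eq' p.coeff.support _ (fun l => p.coeff l)]
    split_ifs with hmem
    · rfl
    · exact (Finsupp.notMem_support_iff.mp hmem).symm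
  · rw [if_neg hw]
    exact Finset.sum_eq_zero fun l _ => by rw [if_neg (fun h => hw h.1)]


/-- `q` is an nc complex hessian of some nc polynomial iff
(P1) each monomial of `q` contains exactly one `h_j` and exactly one `h_kᵀ`, and
(P2) whenever a monomial occurs in `q`, every monomial Levi-differentially wed to it
also occurs in `q` with the same coefficient. -/
theorem isComplexHessian_iff {g : ℕ} (q : MonoidAlgebra ℝ (FreeMonoid (LV g))) :
    ((∀ w ∈ q.coeff.support, OneHOneHT w) ∧
      (∀ w ∈ q.coeff.support, ∀ w', LeviWed w w' → q.coeff w' = q.coeff w))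
      ↔ ∃ p : MonoidAlgebra ℝ (FreeMonoid (XV g)), q = complexHessianM p := by
  classical
  constructor
  · rintro ⟨hP1, hP2⟩
    refine ⟨MonoidAlgebra.ofCoeff (Finsupp.onFinset
      (q.coeff.support.image (fun w => FreeMonoid.ofList ((FreeMonoid.toList w).map flatL)))
      (fun l => if h : ∃ w, w ∈ q.coeff.support ∧
          FreeMonoid.ofList ((FreeMonoid.toList w).map flatL) = l then q.coeff h.choose else 0)
      (fun l hl => ?_)), ?_⟩
    · by_cases h : ∃ w, w ∈ q.coeff.support ∧
          FreeMonoid.ofList ((FreeMonoid.toList w).map flatL) = l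
      · exact Finset.mem_image.mpr ⟨h.choose, h.choose_spec.1, h.choose_spec.2⟩
      · simp only [dif_neg h] at hl; exact absurd rfl hl
    · refine MonoidAlgebra.ext (Finsupp.ext fun w => ?_)
      rw [complexHessianM_apply, MonoidAlgebra.coeff_ofCoeff, Finsupp.onFinset_apply]
      by_cases hw : OneHOneHT w
      · rw [if_pos hw]
        by_cases hex : ∃ w', w' ∈ q.coeff.support ∧
            FreeMonoid.ofList ((FreeMonoid.toList w').map flatL)
              = FreeMonoid.ofList ((FreeMonoid.toList w).map flatL)
        · rw [dif_pos hex]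
          obtain ⟨hmem, hflat⟩ := hex.choose_spec
          have hmap : (FreeMonoid.toList hex.choose).map flatL
              = (FreeMonoid.toList w).map flatL := by
            have := congrArg FreeMonoid.toList hflat
            simpa [FreeMonoid.toList_ofList] using this
          exact hP2 _ hmem w ⟨hP1 _ hmem, hw, hmap⟩
        · rw [dif_neg hex]
          by_contra hq
          exact hex ⟨w, Finsupp.mem_support_iff.mpr hq, rfl⟩
      · rw [if_neg hw]
        by_contra hq
        exact hw (hP1 w (Finsupp.mem_support_iff.mpr hq))
  · rintro ⟨p, rfl⟩
    constructor
    · intro w hwsup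
      have := Finsupp.mem_support_iff.mp hwsup
      rw [complexHessianM_apply] at this
      by_contra h
      rw [if_neg h] at this; exact this rfl
    · rintro w hwsup w' ⟨h1, h2, hfl⟩
      rw [complexHessianM_apply, complexHessianM_apply, if_pos h2, if_pos h1, ← hfl]
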